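/- For d = 2 and α = 2, let μ be the measure on ℝ² with density w(re^{it}) = (1−r²)·P(re^{it}) for 0 ≤ r < 1 and 0 for r ≥ 1, where P is the Poisson kernel. Then for every k ≥ 1 the component measure μ_{k,1} (with respect to Y_{k,1}(re^{it}) = (1/√π) r^k cos kt) satisfies ∫ r^{−k} dμ_{k,1}(r) = 2√π ∫_0^1 r^{k+1}(1−r²) dr = 4√π/((k+2)(k+4)), and hence Σ_k ∫ r^{−k} dμ_{k,1} < ∞. -/

import Mathlib

open MeasureTheory Real Complex
section PoissonAux

-- pointwise Poisson series
lemma poisson_hasSum (r : ℝ) (h0 : 0 ≤ r) (h1 : r < 1) (t : ℝ) :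
    HasSum (fun n : ℕ => 2 * r^(n+1) * Real.cos ((n+1)*t))
      ((1 - r^2)/(1 - 2*r*Real.cos t + r^2) - 1) := by
  set D : ℝ := 1 - 2*r*Real.cos t + r^2 with hD
  have hDpos : 0 < D := by
    have h2 : D = (1-r)^2 + 2*r*(1 - Real.cos t) := by rw [hD]; ring
    have h3 : 0 ≤ 2*r*(1 - Real.cos t) := by
      have := Real.cos_le_one t
      have : 0 ≤ 1 - Real.cos t := by linarith
      positivity
    nlinarith [sq_nonneg (1-r)]
  set z : ℂ := (r:ℂ) * Complex.exp (t * Complex.I) with hz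
  have hnz : ‖z‖ < 1 := by
    rw [hz]
    rw [norm_mul, Complex.norm_real, Real.norm_eq_abs,
      show ((t:ℂ) * Complex.I) = ((t:ℝ):ℂ) * Complex.I from rfl, Complex.norm_exp_ofReal_mul_I]
    rwa [mul_one, _root_.abs_of_nonneg h0]
  have hgeo : HasSum (fun n : ℕ => z ^ n) (1 - z)⁻¹ := hasSum_geometric_of_norm_lt_one hnz
  have hne : (1 : ℂ) - z ≠ 0 := by
    intro h
    rw [sub_eq_zero] at h
    have := congrArg Complex.normSq h
    simp at this
    rw [← h] at hnz
    simp at hnz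
  have hshift : HasSum (fun n : ℕ => z ^ (n+1)) (z * (1 - z)⁻¹) := by
    simpa [pow_succ, mul_comm] using hgeo.mul_left z
  have hre : HasSum (fun n : ℕ => (z ^ (n+1)).re) ((z * (1 - z)⁻¹).re) :=
    Complex.hasSum_re hshift
  have hzpow : ∀ m : ℕ, (z ^ m).re = r ^ m * Real.cos (m * t) := by
    intro m
    rw [hz, mul_pow, ← Complex.exp_nat_mul]
    have : (m : ℂ) * (t * Complex.I) = ((m * t : ℝ) : ℂ) * Complex.I := by push_cast; ring
    rw [this, ← Complex.ofReal_pow, Complex.re_ofReal_mul, Complex.exp_ofReal_mul_I_re]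
  -- compute (z * (1-z)⁻¹).re
  have hzre : z.re = r * Real.cos t := by
    rw [hz, Complex.re_ofReal_mul, Complex.exp_ofReal_mul_I_re]
  have hzim : z.im = r * Real.sin t := by
    rw [hz, Complex.im_ofReal_mul]
    have : (↑t * Complex.I).im = t := by simp
    rw [show Complex.exp (↑t * Complex.I) = Complex.exp (((t:ℝ):ℂ) * Complex.I) by norm_cast,
      Complex.exp_ofReal_mul_I_im]
  have hnormSq : Complex.normSq (1 - z) = D := by
    rw [Complex.normSq_apply]
    simp [hzre, hzim]
    rw [hD]
    nlinarith [Real.sin_sq_add_cos_sq t]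
  have hval : (z * (1 - z)⁻¹).re = (1 - r * Real.cos t)/D - 1 := by
    have : z * (1 - z)⁻¹ = (1 - z)⁻¹ - 1 := by
      field_simp
      ring
    rw [this, Complex.sub_re, Complex.inv_re, hnormSq]
    simp [hzre]
  have final : HasSum (fun n : ℕ => 2 * (z ^ (n+1)).re)
      ((1 - r^2)/D - 1) := by
    have h2 := hre.mul_left 2
    rw [show ((1 - r^2)/D - 1 : ℝ) = 2 * (z * (1 - z)⁻¹).re by
      rw [hval]
      field_simp
      ring]
    exact h2
  convert final using 2 with n
  rw [hzpow (n+1)]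
  push_cast
  ring

lemma D_pos (r : ℝ) (h0 : 0 ≤ r) (h1 : r < 1) (t : ℝ) :
    0 < 1 - 2*r*Real.cos t + r^2 := by
  have h3 : 0 ≤ 2*r*(1 - Real.cos t) := by
    have := Real.cos_le_one t
    have : 0 ≤ 1 - Real.cos t := by linarith
    positivity
  nlinarith [sq_nonneg (1-r)]

lemma P_cont (r : ℝ) (h0 : 0 ≤ r) (h1 : r < 1) :
    Continuous (fun t => (1 - r^2)/(1 - 2*r*Real.cos t + r^2)) := by
  apply continuous_const.div
  · fun_prop
  · intro t; exact (D_pos r h0 h1 t).ne'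

lemma integral_cos_int_mul (m : ℤ) (hm : m ≠ 0) :
    ∫ t in (0:ℝ)..(2*π), Real.cos (m * t) = 0 := by
  have hc : (m:ℝ) ≠ 0 := Int.cast_ne_zero.mpr hm
  rw [intervalIntegral.integral_comp_mul_left Real.cos hc, integral_cos]
  have h1 : (m:ℝ) * (2*π) = (2*m : ℤ) * π := by push_cast; ring
  have h2 : Real.sin ((m:ℝ) * (2*π)) = 0 := by rw [h1]; exact Real.sin_int_mul_pi _
  simp [h2]

lemma cos_mul_cos' (x y : ℝ) :
    Real.cos x * Real.cos y = (Real.cos (x+y) + Real.cos (x-y)) / 2 := by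
  rw [Real.cos_add, Real.cos_sub]; ring

lemma orth (n k : ℕ) (hk : k ≠ 0) :
    ∫ t in (0:ℝ)..(2*π), Real.cos (n*t) * Real.cos (k*t)
      = if n = k then π else 0 := by
  have key : ∀ t : ℝ, Real.cos (n*t) * Real.cos (k*t)
      = (Real.cos (((n:ℤ)+k) * t) + Real.cos (((n:ℤ)-k) * t)) / 2 := by
    intro t
    rw [cos_mul_cos' ((n:ℝ)*t) ((k:ℝ)*t)]
    push_cast; ring_nf
  rw [intervalIntegral.integral_congr (g := fun t =>
      (Real.cos (((n:ℤ)+k) * t) + Real.cos (((n:ℤ)-k) * t)) / 2) (fun t _ => key t)]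
  have hint : ∀ c : ℝ, IntervalIntegrable (fun t => Real.cos (c * t)) volume 0 (2*π) :=
    fun c => (Real.continuous_cos.comp (continuous_const.mul continuous_id)).intervalIntegrable _ _
  rw [show (fun t => (Real.cos (((n:ℤ)+k) * t) + Real.cos (((n:ℤ)-k) * t)) / 2)
      = fun t => (Real.cos ((((n:ℤ)+k):ℝ) * t) + Real.cos ((((n:ℤ)-k):ℝ) * t)) / 2 by
        push_cast; rfl]
  rw [intervalIntegral.integral_div, intervalIntegral.integral_add (hint _) (hint _)]
  have hnk : ((n:ℤ)+k) ≠ 0 := by omega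
  have h1 : ∫ t in (0:ℝ)..(2*π), Real.cos ((((n:ℤ)+k):ℝ) * t) = 0 := by
    exact_mod_cast integral_cos_int_mul _ hnk
  by_cases h : n = k
  · subst h
    have h2 : ∫ t in (0:ℝ)..(2*π), Real.cos ((((n:ℤ)-n):ℝ) * t) = 2*π := by
      simp
    rw [h1, h2]; simp
  · have hnk2 : ((n:ℤ)-k) ≠ 0 := by omega
    have h2 : ∫ t in (0:ℝ)..(2*π), Real.cos ((((n:ℤ)-k):ℝ) * t) = 0 := by
      exact_mod_cast integral_cos_int_mul _ hnk2
    rw [h1, h2]; simp [h]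

lemma poisson_integral (r : ℝ) (h0 : 0 ≤ r) (h1 : r < 1) (k : ℕ) (hk : k ≠ 0) :
    ∫ t in (0:ℝ)..(2*π), (1 - r^2)/(1 - 2*r*Real.cos t + r^2) * Real.cos (k*t)
      = 2*π*r^k := by
  have h2π : (0:ℝ) ≤ 2*π := by positivity
  set μ := volume.restrict (Set.Ioc (0:ℝ) (2*π)) with hμ
  set F : ℕ → ℝ → ℝ := fun n t => 2*r^(n+1) * (Real.cos ((n+1)*t) * Real.cos (k*t)) with hF
  have hFcont : ∀ n, Continuous (F n) := by intro n; rw [hF]; fun_prop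
  have hFint : ∀ n, Integrable (F n) μ := fun n => (hFcont n).integrableOn_Ioc
  have hvol : (volume (Set.Ioc (0:ℝ) (2*π))).toReal = 2*π := by
    rw [Real.volume_Ioc]
    simp [h2π, Real.pi_nonneg]
  have hnorm : ∀ n, ∫ t, ‖F n t‖ ∂μ ≤ (4*π*r) * r^n := by
    intro n
    have hb : ∀ t, ‖F n t‖ ≤ 2*r^(n+1) := by
      intro t
      rw [hF]
      dsimp only
      rw [Real.norm_eq_abs, abs_mul]
      have h1c := abs_cos_le_one (((n:ℝ)+1)*t)
      have h2c := abs_cos_le_one ((k:ℝ)*t)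
      have habs : |Real.cos (((n:ℝ)+1)*t) * Real.cos ((k:ℝ)*t)| ≤ 1 := by
        rw [abs_mul]
        calc |Real.cos (((n:ℝ)+1)*t)| * |Real.cos ((k:ℝ)*t)| ≤ 1 * 1 :=
          mul_le_mul h1c h2c (abs_nonneg _) zero_le_one
        _ = 1 := one_mul 1
      have h2n : (0:ℝ) ≤ 2*r^(n+1) := by positivity
      calc |2*r^(n+1)| * |Real.cos (((n:ℝ)+1)*t) * Real.cos ((k:ℝ)*t)|
          ≤ |2*r^(n+1)| * 1 := mul_le_mul_of_nonneg_left habs (abs_nonneg _)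
        _ = 2*r^(n+1) := by rw [mul_one, _root_.abs_of_nonneg h2n]
    calc ∫ t, ‖F n t‖ ∂μ ≤ ∫ _t, 2*r^(n+1) ∂μ := by
          apply integral_mono_of_nonneg
          · filter_upwards with t using norm_nonneg _
          · exact integrable_const _
          · filter_upwards with t using hb t
      _ = (2*π) * (2*r^(n+1)) := by
            rw [hμ, integral_const, smul_eq_mul, measureReal_restrict_apply_univ, measureReal_def, hvol]
      _ = (4*π*r) * r^n := by ring
  have hsum : Summable (fun n => ∫ t, ‖F n t‖ ∂μ) := by
    apply Summable.of_nonneg_of_le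
      (fun n => integral_nonneg fun t => norm_nonneg _) hnorm
    exact (summable_geometric_of_lt_one h0 h1).mul_left _
  have key := hasSum_integral_of_summable_integral_norm hFint hsum
  have htsum : ∀ t : ℝ, ∑' n, F n t
      = ((1 - r^2)/(1 - 2*r*Real.cos t + r^2) - 1) * Real.cos (k*t) := by
    intro t
    have := (poisson_hasSum r h0 h1 t).mul_right (Real.cos (k*t))
    refine HasSum.tsum_eq ?_
    have e : (fun n => F n t) = fun i : ℕ => 2 * r ^ (i + 1) * Real.cos (((i:ℝ) + 1) * t) * Real.cos (↑k * t) := by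
      funext n
      rw [hF]
      push_cast
      ring
    rw [e]
    exact this
  have hval : ∀ n, ∫ t, F n t ∂μ = if n = k - 1 then 2*π*r^k else 0 := by
    intro n
    have : ∫ t, F n t ∂μ = ∫ t in (0:ℝ)..(2*π), F n t := by
      rw [intervalIntegral.integral_of_le h2π]
    rw [this, hF]
    simp only
    rw [intervalIntegral.integral_const_mul]
    have := orth (n+1) k hk
    push_cast at this ⊢
    rw [this]
    by_cases h : n + 1 = k
    · rw [if_pos h, if_pos (by omega)]
      rw [show n + 1 = k from h]
      ring
    · rw [if_neg h, if_neg (by omega)]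
      ring
  have hHS : HasSum (fun n => ∫ t, F n t ∂μ) (2*π*r^k) := by
    rw [show (fun n => ∫ t, F n t ∂μ) = fun n => if n = k-1 then 2*π*r^k else 0 by
      funext n; exact hval n]
    simpa using hasSum_ite_eq (k-1) (2*π*r^k)
  have hPm1 : ∫ t, ((1 - r^2)/(1 - 2*r*Real.cos t + r^2) - 1) * Real.cos (k*t) ∂μ
      = 2*π*r^k := by
    have := key.tsum_eq
    rw [← hHS.tsum_eq, this]
    apply integral_congr_ae
    filter_upwards with t using (htsum t).symm
  have hsplit : ∀ t : ℝ, (1 - r^2)/(1 - 2*r*Real.cos t + r^2) * Real.cos (k*t)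
      = Real.cos ((k:ℝ)*t) + ((1 - r^2)/(1 - 2*r*Real.cos t + r^2) - 1) * Real.cos (k*t) := by
    intro t; ring
  rw [intervalIntegral.integral_congr (g := fun t =>
      Real.cos ((k:ℝ)*t) + ((1 - r^2)/(1 - 2*r*Real.cos t + r^2) - 1) * Real.cos (k*t))
      (fun t _ => hsplit t)]
  have hc1 : IntervalIntegrable (fun t => Real.cos ((k:ℝ)*t)) volume 0 (2*π) := by
    apply Continuous.intervalIntegrable; fun_prop
  have hc2 : IntervalIntegrable
      (fun t => ((1 - r^2)/(1 - 2*r*Real.cos t + r^2) - 1) * Real.cos (k*t)) volume 0 (2*π) := by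
    apply Continuous.intervalIntegrable
    exact (((P_cont r h0 h1).sub continuous_const).mul (by fun_prop))
  rw [intervalIntegral.integral_add hc1 hc2]
  have hcos0 : ∫ t in (0:ℝ)..(2*π), Real.cos ((k:ℝ)*t) = 0 := by
    have := integral_cos_int_mul k (by exact_mod_cast hk)
    exact_mod_cast this
  rw [hcos0, zero_add, ← hPm1, intervalIntegral.integral_of_le h2π]

end PoissonAux

/-- For `d = 2`, the measure with density `w(re^{it}) = (1-r²) P(re^{it})` on the unit disc
(`P` the Poisson kernel) has component measures `dμ_{k,1}(r) = r^{k+1} w_{k,1}(r) dr` (with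
respect to `Y_{k,1}(re^{it}) = π^{-1/2} r^k cos kt`) satisfying
`∫ r^{-k} dμ_{k,1} = 2√π ∫₀¹ r^{k+1}(1-r²) dr = 4√π/((k+2)(k+4))`, and these quantities are
summable in `k`. -/
theorem poisson_density_component_integrals
    (w : ℕ → ℝ → ℝ)
    (hw : ∀ (k : ℕ) (r : ℝ), 0 ≤ r → r < 1 →
      w k r = ∫ t in (0:ℝ)..(2 * π),
        (1 - r ^ 2) * ((1 - r ^ 2) / (1 - 2 * r * Real.cos t + r ^ 2)) *
          ((1 / Real.sqrt π) * Real.cos (k * t))) :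
    (∀ k : ℕ, 1 ≤ k →
      (∫ r in (0:ℝ)..1, (r : ℝ) ^ (-(k : ℤ)) * (r ^ (k + 1) * w k r))
        = 2 * Real.sqrt π * ∫ r in (0:ℝ)..1, r ^ (k + 1) * (1 - r ^ 2) ∧
      (∫ r in (0:ℝ)..1, (r : ℝ) ^ (-(k : ℤ)) * (r ^ (k + 1) * w k r))
        = 4 * Real.sqrt π / (((k : ℝ) + 2) * ((k : ℝ) + 4))) ∧
    Summable (fun k : ℕ =>
      ∫ r in (0:ℝ)..1, (r : ℝ) ^ (-((k : ℤ) + 1)) * (r ^ (k + 2) * w (k + 1) r)) := by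
  have hπ : Real.sqrt π * Real.sqrt π = π := Real.mul_self_sqrt Real.pi_nonneg
  have hs : Real.sqrt π ≠ 0 := by positivity
  have wform : ∀ k : ℕ, k ≠ 0 → ∀ r : ℝ, 0 ≤ r → r < 1 →
      w k r = 2 * Real.sqrt π * (r^k * (1 - r^2)) := by
    intro k hk r h0 h1
    rw [hw k r h0 h1]
    have hptw : ∀ t:ℝ, (1 - r^2) * ((1-r^2)/(1-2*r*Real.cos t+r^2)) *
        ((1/Real.sqrt π) * Real.cos (k*t))
        = ((1-r^2) * (1/Real.sqrt π)) *
          ((1-r^2)/(1-2*r*Real.cos t+r^2) * Real.cos (k*t)) := by intro t; ring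
    rw [intervalIntegral.integral_congr (fun t _ => hptw t),
      intervalIntegral.integral_const_mul, poisson_integral r h0 h1 k hk]
    rw [← hπ]
    field_simp
    have h2 : Real.sqrt π ^ 2 = π := by rw [sq]; exact hπ
    have h3 : Real.sqrt (Real.sqrt π ^ 2) ^ 2 = Real.sqrt π ^ 2 := Real.sq_sqrt (by positivity)
    linear_combination -(r^k*(1-r^2)*h3)
  have I_eq : ∀ k : ℕ, 1 ≤ k →
      (∫ r in (0:ℝ)..1, (r:ℝ)^(-(k:ℤ)) * (r^(k+1) * w k r))
        = 2*Real.sqrt π * ∫ r in (0:ℝ)..1, r^(k+1)*(1-r^2) := by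
    intro k hk
    have hk0 : k ≠ 0 := by omega
    have h1 : (∫ r in (0:ℝ)..1, (r:ℝ)^(-(k:ℤ)) * (r^(k+1) * w k r))
        = ∫ r in (0:ℝ)..1, 2*Real.sqrt π * (r^(k+1)*(1-r^2)) := by
      apply intervalIntegral.integral_congr_ae
      filter_upwards [compl_mem_ae_iff.mpr (measure_singleton (1:ℝ))] with x hx hmem
      rw [Set.uIoc_of_le zero_le_one] at hmem
      obtain ⟨hx0, hx1⟩ := hmem
      have hxne1 : x ≠ 1 := hx
      have hxlt : x < 1 := lt_of_le_of_ne hx1 hxne1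
      rw [wform k hk0 x hx0.le hxlt]
      have hxne : x ≠ 0 := ne_of_gt hx0
      rw [zpow_neg, zpow_natCast]
      have hpk : x^k ≠ 0 := pow_ne_zero _ hxne
      field_simp
    rw [h1, intervalIntegral.integral_const_mul]
  have J : ∀ k:ℕ, (∫ r in (0:ℝ)..1, r^(k+1)*(1-r^2)) = 1/((k:ℝ)+2) - 1/((k:ℝ)+4) := by
    intro k
    have hptw : ∀ r:ℝ, r^(k+1)*(1-r^2) = r^(k+1) - r^(k+3) := by intro r; ring
    rw [intervalIntegral.integral_congr (fun r _ => hptw r),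
      intervalIntegral.integral_sub (intervalIntegral.intervalIntegrable_pow _) (intervalIntegral.intervalIntegrable_pow _),
      integral_pow, integral_pow]
    push_cast
    norm_num
    ring
  have I_val : ∀ k : ℕ, 1 ≤ k →
      (∫ r in (0:ℝ)..1, (r:ℝ)^(-(k:ℤ)) * (r^(k+1) * w k r))
        = 4 * Real.sqrt π / (((k:ℝ)+2) * ((k:ℝ)+4)) := by
    intro k hk
    rw [I_eq k hk, J k]
    have hk2 : ((k:ℝ)+2) ≠ 0 := by positivity
    have hk4 : ((k:ℝ)+4) ≠ 0 := by positivity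
    field_simp
    ring
  refine ⟨fun k hk => ⟨I_eq k hk, I_val k hk⟩, ?_⟩
  have hsummable : Summable (fun k : ℕ => 4 * Real.sqrt π / (((k:ℝ)+3) * ((k:ℝ)+5))) := by
    have hbase : Summable (fun n : ℕ => 1/((n:ℝ)+1)^2) := by
      have h0 : Summable (fun n : ℕ => 1/((n:ℝ))^2) := by
        exact_mod_cast Real.summable_one_div_nat_pow.mpr one_lt_two
      exact ((summable_nat_add_iff 1).mpr h0).congr (fun n => by push_cast; ring)
    apply Summable.of_nonneg_of_le (fun n => by positivity)
      (fun n => ?_) (hbase.mul_left (4 * Real.sqrt π))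
    have h1 : ((n:ℝ)+1)^2 ≤ ((n:ℝ)+3)*((n:ℝ)+5) := by nlinarith [Nat.cast_nonneg (α := ℝ) n]
    have h2 : (0:ℝ) < ((n:ℝ)+1)^2 := by positivity
    calc 4 * Real.sqrt π / (((n:ℝ)+3) * ((n:ℝ)+5))
        ≤ 4 * Real.sqrt π / ((n:ℝ)+1)^2 :=
          div_le_div_of_nonneg_left (by positivity) h2 h1
      _ = 4 * Real.sqrt π * (1/((n:ℝ)+1)^2) := by ring
  apply hsummable.congr
  intro k
  have := (I_val (k+1) (by omega)).symm
  push_cast at this ⊢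
  convert this using 2 <;> push_cast <;> ring
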